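/- Let φ : (α,β) → (0,∞) be continuous and complete, with flow σ_s(x) := F^{−1}(F(x) + s) where F(x) := ∫_γ^x dt/φ(t). Let ψ : (α,β) → (0,∞) be differentiable and suppose the function C_{ψ,φ} := φψ′/ψ extends to a continuous function on [α,β]; set λ := C_{ψ,φ}(α) (the value of the continuous extension at α). Then for every s ∈ ℝ: lim_{t→α+} ψ(σ_s(t))/ψ(t) = e^{λ s}; equivalently, lim_{t→α+} ψ(t)/ψ(σ_s(t)) = e^{−λ s}. (The key identity is log(ψ(σ_s(t))/ψ(t)) = ∫_0^s C_{ψ,φ}(σ_τ(t)) dτ.) -/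

import Mathlib

open Real Set Filter Topology

/-- The open interval `(α, β)` of real numbers, where `α β` are extended reals. -/
def EI (α β : EReal) : Set ℝ := {x : ℝ | α < (x : EReal) ∧ (x : EReal) < β}

/-- `u : ℝ → ℝ` (thought of as a function on `(α, β)`) extends to a continuous
function on `[α, β] ⊆ EReal`. -/
def ContExt (α β : EReal) (u : ℝ → ℝ) : Prop :=
  ∃ g : EReal → ℝ, ContinuousOn g (Set.Icc α β) ∧
    ∀ x : ℝ, x ∈ EI α β → g (x : EReal) = u x

/-- The operator `X u := φ · u′`. -/
noncomputable def Xop (φ u : ℝ → ℝ) : ℝ → ℝ := fun x => φ x * deriv u x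

/-- The iterates `X^k u`. -/
noncomputable def Xiter (φ : ℝ → ℝ) : ℕ → (ℝ → ℝ) → (ℝ → ℝ)
  | 0, u => u
  | n + 1, u => Xop φ (Xiter φ n u)

/-- The space `C_φ^{(n)}`: inductively, `C_φ^{(0)}` consists of the functions having a
continuous extension to `[α, β]`, and `u ∈ C_φ^{(n+1)}` iff `u ∈ C_φ^{(n)}`, `X^n u` is
differentiable on `(α, β)`, and `X^{n+1} u` extends to a continuous function on `[α, β]`. -/
def CN (α β : EReal) (φ : ℝ → ℝ) : ℕ → Set (ℝ → ℝ)
  | 0 => {u | ContExt α β u}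
  | n + 1 => {u | u ∈ CN α β φ n ∧
      (∀ x ∈ EI α β, DifferentiableAt ℝ (Xiter φ n u) x) ∧
      ContExt α β (Xiter φ (n + 1) u)}

/-- The space `C_φ^{(∞)} := ⋂ₙ C_φ^{(n)}`. -/
def Cinf (α β : EReal) (φ : ℝ → ℝ) : Set (ℝ → ℝ) := ⋂ n : ℕ, CN α β φ n

/-- The spaces `C_φ^{(n)}` for `n ∈ ℤ₊ ∪ {∞}`. -/
def CNE (α β : EReal) (φ : ℝ → ℝ) (n : ℕ∞) : Set (ℝ → ℝ) :=
  WithTop.recTopCoe (Cinf α β φ) (fun k => CN α β φ k) n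

/-- let `φ` be continuous, positive and complete on `(α,β)` with
`F(x) = ∫_γ^x dt/φ(t)` and flow `σ_s(t) = F⁻¹(F(t)+s) = G(F(t)+s)`.  Let `ψ` be
differentiable and positive on `(α,β)` such that `C_{ψ,φ} := φψ′/ψ` extends to a
continuous function `Cb` on `[α,β]`, and set `λ := Cb(α)`.  Then for every `s`,
`ψ(σ_s(t))/ψ(t) → e^{λs}` as `t → α⁺`; equivalently `ψ(t)/ψ(σ_s(t)) → e^{−λs}`. -/
theorem psi_flow_limit (α β : EReal) (hαβ : α < β) (φ : ℝ → ℝ)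
    (hφc : ContinuousOn φ (EI α β)) (hφpos : ∀ x ∈ EI α β, 0 < φ x)
    (γ : ℝ) (hγ : γ ∈ EI α β)
    (hcomp₁ : ¬ MeasureTheory.IntegrableOn (fun t => (φ t)⁻¹)
      {x : ℝ | α < (x : EReal) ∧ x < γ})
    (hcomp₂ : ¬ MeasureTheory.IntegrableOn (fun t => (φ t)⁻¹)
      {x : ℝ | γ < x ∧ (x : EReal) < β})
    (F : ℝ → ℝ) (hF : ∀ x, F x = ∫ t in γ..x, (φ t)⁻¹)
    (G : ℝ → ℝ) (hGmem : ∀ y, G y ∈ EI α β)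
    (hGF : ∀ x ∈ EI α β, G (F x) = x) (hFG : ∀ y, F (G y) = y)
    (ψ : ℝ → ℝ) (hψd : ∀ x ∈ EI α β, DifferentiableAt ℝ ψ x)
    (hψpos : ∀ x ∈ EI α β, 0 < ψ x)
    (Cb : EReal → ℝ) (hCbc : ContinuousOn Cb (Set.Icc α β))
    (hCbI : ∀ x ∈ EI α β, Cb (x : EReal) = φ x * deriv ψ x / ψ x) :
    ∀ s : ℝ,
      Tendsto (fun t : ℝ => ψ (G (F t + s)) / ψ t)
        (comap Real.toEReal (𝓝[>] α)) (𝓝 (Real.exp (Cb α * s))) ∧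
      Tendsto (fun t : ℝ => ψ t / ψ (G (F t + s)))
        (comap Real.toEReal (𝓝[>] α)) (𝓝 (Real.exp (-(Cb α * s)))) := by
  classical
  set L := comap Real.toEReal (𝓝[>] α) with hL
  set f : ℝ → ℝ := fun t => (φ t)⁻¹ with hfdef
  -- order-connectedness of EI
  have hconn : ∀ {a b x : ℝ}, a ∈ EI α β → b ∈ EI α β → x ∈ Set.uIcc a b → x ∈ EI α β := by
    intro a b x ha hb hx
    rcases Set.mem_uIcc.1 hx with ⟨h1, h2⟩ | ⟨h1, h2⟩
    · exact ⟨lt_of_lt_of_le ha.1 (EReal.coe_le_coe_iff.2 h1),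
        lt_of_le_of_lt (EReal.coe_le_coe_iff.2 h2) hb.2⟩
    · exact ⟨lt_of_lt_of_le hb.1 (EReal.coe_le_coe_iff.2 h1),
        lt_of_le_of_lt (EReal.coe_le_coe_iff.2 h2) ha.2⟩
  have hfc : ContinuousOn f (EI α β) := hφc.inv₀ fun x hx => (hφpos x hx).ne'
  have hfpos : ∀ x ∈ EI α β, 0 < f x := fun x hx => inv_pos.2 (hφpos x hx)
  have hfint : ∀ {a b : ℝ}, a ∈ EI α β → b ∈ EI α β →
      IntervalIntegrable f MeasureTheory.volume a b :=
    fun {a b} ha hb => (hfc.mono fun x hx => hconn ha hb hx).intervalIntegrable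
  have hFsub : ∀ {a b : ℝ}, a ∈ EI α β → b ∈ EI α β → F b - F a = ∫ x in a..b, f x := by
    intro a b ha hb
    rw [hF a, hF b]
    exact intervalIntegral.integral_interval_sub_left (hfint hγ hb) (hfint hγ ha)
  have hFmono : ∀ {a b : ℝ}, a ∈ EI α β → b ∈ EI α β → a ≤ b → F a ≤ F b := by
    intro a b ha hb hab
    have h1 := hFsub ha hb
    have h2 : 0 ≤ ∫ x in a..b, f x :=
      intervalIntegral.integral_nonneg hab fun u hu =>
        (hfpos u (hconn ha hb (by rw [Set.uIcc_of_le hab]; exact hu))).le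
    linarith
  -- membership of the set S
  set S : Set ℝ := {x : ℝ | α < (x : EReal) ∧ x < γ} with hSdef
  have hSsub : S ⊆ EI α β := fun x hx =>
    ⟨hx.1, lt_trans (EReal.coe_lt_coe_iff.2 hx.2) hγ.2⟩
  -- Key: F is unbounded below near α
  have hkey : ∀ M : ℝ, ∃ t₀ ∈ S, F t₀ < M := by
    intro M
    by_contra hcon
    push_neg at hcon
    apply hcomp₁
    have hFγ : F γ = 0 := by rw [hF]; simp
    have hbound : ∀ t ∈ S, ∫ x in t..γ, f x ≤ -M := by
      intro t ht
      have h1 := hFsub (hSsub ht) hγ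
      have h2 := hcon t ht
      linarith
    have hnormbound : ∀ t ∈ S, (∫ x in t..γ, ‖f x‖) ≤ -M := by
      intro t ht
      have heq : (∫ x in t..γ, ‖f x‖) = ∫ x in t..γ, f x := by
        apply intervalIntegral.integral_congr
        intro x hx
        exact Real.norm_of_nonneg (hfpos x (hconn (hSsub ht) hγ hx)).le
      rw [heq]; exact hbound t ht
    have hαne : α ≠ ⊤ := hγ.1.ne_top
    rcases eq_or_ne α ⊥ with hbot | hne
    · -- α = ⊥ : S = Iio γ
      subst hbot
      have hSeq : S = Iio γ := by
        ext x; simp [hSdef, EReal.bot_lt_coe]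
      rw [hSeq]
      have hmem : ∀ n : ℕ, (γ - 1 - n) ∈ S := by
        intro n
        refine ⟨EReal.bot_lt_coe _, ?_⟩
        have : (0:ℝ) ≤ n := Nat.cast_nonneg n
        linarith
      have hγ1S : (γ - 1) ∈ S := ⟨EReal.bot_lt_coe _, by linarith⟩
      have hIic : MeasureTheory.IntegrableOn f (Iic (γ - 1)) := by
        apply MeasureTheory.integrableOn_Iic_of_intervalIntegral_norm_bounded
          (l := atTop) (-M + ∫ x in (γ-1)..γ, ‖f x‖) (γ - 1) (a := fun n : ℕ => γ - 1 - n)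
        · intro n
          exact (hfint (hSsub (hmem n)) (hSsub hγ1S)).1
        · have h1 : Tendsto (fun n : ℕ => (n:ℝ)) atTop atTop := tendsto_natCast_atTop_atTop
          have h2 : Tendsto (fun n : ℕ => -(n:ℝ)) atTop atBot := tendsto_neg_atTop_atBot.comp h1
          simpa [sub_eq_add_neg] using tendsto_atBot_add_const_left atTop (γ - 1) h2
        · filter_upwards with n
          have hsplit : (∫ x in (γ-1-(n:ℝ))..(γ-1), ‖f x‖) + (∫ x in (γ-1)..γ, ‖f x‖)
              = ∫ x in (γ-1-(n:ℝ))..γ, ‖f x‖ :=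
            intervalIntegral.integral_add_adjacent_intervals
              ((hfint (hSsub (hmem n)) (hSsub hγ1S)).norm)
              ((hfint (hSsub hγ1S) hγ).norm)
          have h2 := hnormbound _ (hmem n)
          have h3 : (0:ℝ) ≤ ∫ x in (γ-1)..γ, ‖f x‖ := by
            apply intervalIntegral.integral_nonneg (by linarith)
            intro u hu; exact norm_nonneg _
          linarith
      have hIcc : MeasureTheory.IntegrableOn f (Icc (γ - 1) γ) := by
        apply ContinuousOn.integrableOn_Icc
        apply hfc.mono
        intro x hx
        exact hconn (hSsub hγ1S) hγ (by rw [Set.uIcc_of_le (by linarith)]; exact hx)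
      apply MeasureTheory.IntegrableOn.mono_set (hIic.union hIcc)
      intro x hx
      rcases le_or_gt x (γ - 1) with h | h
      · exact Or.inl h
      · exact Or.inr ⟨h.le, hx.le⟩
    · -- α = ↑a real
      obtain ⟨a, rfl⟩ : ∃ a : ℝ, α = (a : EReal) :=
        ⟨α.toReal, (EReal.coe_toReal hαne hne).symm⟩
      have haγ : a < γ := EReal.coe_lt_coe_iff.1 hγ.1
      have hSeq : S = Ioo a γ := by
        ext x; simp [hSdef, EReal.coe_lt_coe_iff]
      rw [hSeq]
      set an : ℕ → ℝ := fun n => a + (γ - a) / (n + 2) with handef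
      have hanS : ∀ n, an n ∈ S := by
        intro n
        have h1 : (0:ℝ) < (n:ℝ) + 2 := by positivity
        have h2 : (0:ℝ) < (γ - a) / (n + 2) := by
          apply div_pos (by linarith) h1
        have h3 : (γ - a) / (n + 2) < γ - a := by
          apply div_lt_self (by linarith) (by linarith)
        constructor
        · exact EReal.coe_lt_coe_iff.2 (by simp [handef]; linarith)
        · simp only [handef]; linarith
      have hanlt : ∀ n, an n < γ := fun n => (hanS n).2
      have htend : Tendsto an atTop (𝓝 a) := by
        have h1 : Tendsto (fun n : ℕ => (γ - a) / ((n:ℝ) + 2)) atTop (𝓝 0) := by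
          apply Tendsto.div_atTop tendsto_const_nhds
          exact tendsto_atTop_add_const_right _ 2 tendsto_natCast_atTop_atTop
        simpa using tendsto_const_nhds.add h1
      have hcov : MeasureTheory.AECover (MeasureTheory.volume.restrict (Ioo a γ)) atTop
          (fun n => Ioc (an n) γ) :=
        MeasureTheory.aecover_Ioo_of_Ioc htend tendsto_const_nhds
      apply hcov.integrable_of_integral_norm_bounded (-M)
      · intro n
        rw [MeasureTheory.IntegrableOn, MeasureTheory.Measure.restrict_restrict measurableSet_Ioc]
        exact (hfint (hSsub (hanS n)) hγ).1.mono_set Set.inter_subset_left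
      · filter_upwards with n
        rw [MeasureTheory.Measure.restrict_restrict measurableSet_Ioc]
        have hle : ∫ x in Ioc (an n) γ ∩ Ioo a γ, ‖f x‖ ≤ ∫ x in Ioc (an n) γ, ‖f x‖ := by
          apply MeasureTheory.setIntegral_mono_set (hfint (hSsub (hanS n)) hγ).1.norm
          · exact MeasureTheory.ae_of_all _ fun x => norm_nonneg _
          · exact MeasureTheory.ae_of_all _ fun x hx => hx.1
        have heq : (∫ x in Ioc (an n) γ, ‖f x‖) = ∫ x in (an n)..γ, ‖f x‖ :=
          (intervalIntegral.integral_of_le (hanlt n).le).symm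
        calc ∫ x in Ioc (an n) γ ∩ Ioo a γ, ‖f x‖ ≤ ∫ x in Ioc (an n) γ, ‖f x‖ := hle
          _ = ∫ x in (an n)..γ, ‖f x‖ := heq
          _ ≤ -M := hnormbound _ (hanS n)
  -- F tends to -∞ along L
  have hFtop : ∀ M : ℝ, ∀ᶠ t : ℝ in L, F t < M := by
    intro M
    obtain ⟨t₀, ht₀S, ht₀F⟩ := hkey M
    have h1 : ∀ᶠ x : EReal in 𝓝[>] α, x ∈ Iio (t₀ : EReal) :=
      mem_nhdsWithin_of_mem_nhds (Iio_mem_nhds ht₀S.1)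
    have h2 : ∀ᶠ x : EReal in 𝓝[>] α, x ∈ Ioi α := self_mem_nhdsWithin
    filter_upwards [tendsto_comap.eventually (h1.and h2)] with t ht
    have htlt : t < t₀ := EReal.coe_lt_coe_iff.1 ht.1
    have htEI : t ∈ EI α β :=
      ⟨ht.2, lt_trans ht.1 (lt_trans (EReal.coe_lt_coe_iff.2 ht₀S.2) hγ.2)⟩
    exact lt_of_le_of_lt (hFmono htEI (hSsub ht₀S) htlt.le) ht₀F
  -- eventually in EI
  have hevEI : ∀ᶠ t : ℝ in L, t ∈ EI α β := by
    have h1 : ∀ᶠ x : EReal in 𝓝[>] α, x ∈ Iio (γ : EReal) :=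
      mem_nhdsWithin_of_mem_nhds (Iio_mem_nhds hγ.1)
    have h2 : ∀ᶠ x : EReal in 𝓝[>] α, x ∈ Ioi α := self_mem_nhdsWithin
    filter_upwards [tendsto_comap.eventually (h1.and h2)] with t ht
    exact ⟨ht.2, lt_trans ht.1 hγ.2⟩
  have hCbcont : ContinuousOn (fun x : ℝ => Cb x * f x) (EI α β) := by
    apply ContinuousOn.mul _ hfc
    apply hCbc.comp continuous_coe_real_ereal.continuousOn
    intro x hx; exact ⟨hx.1.le, hx.2.le⟩
  intro s
  set σ : ℝ → ℝ := fun t => G (F t + s) with hσdef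
  have hσEI : ∀ t, σ t ∈ EI α β := fun t => hGmem _
  have hFσ : ∀ t, F (σ t) = F t + s := fun t => hFG _
  -- Main estimate
  have hmain : Tendsto (fun t => (Real.log (ψ (σ t)) - Real.log (ψ t)) - Cb α * s) L (𝓝 0) := by
    rw [Metric.tendsto_nhds]
    intro δ hδ
    set ε := δ / (|s| + 1) with hεdef
    have hε : 0 < ε := div_pos hδ (by positivity)
    have hcw : ContinuousWithinAt Cb (Set.Icc α β) α := hCbc α ⟨le_refl α, hαβ.le⟩
    have hU : Cb ⁻¹' Metric.ball (Cb α) ε ∈ 𝓝[Set.Icc α β] α :=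
      hcw (Metric.ball_mem_nhds (Cb α) hε)
    rw [mem_nhdsWithin] at hU
    obtain ⟨U, hUo, hαU, hUsub⟩ := hU
    obtain ⟨c, hc1, hc2⟩ := exists_Ico_subset_of_mem_nhds (hUo.mem_nhds hαU) ⟨β, hαβ⟩
    obtain ⟨z, hz1, hz2⟩ := exists_between (lt_min hc1 hγ.1)
    have hzt : z ≠ ⊤ := ((hz2.trans_le (min_le_right _ _))).ne_top
    have hzb : z ≠ ⊥ := hz1.ne_bot
    set c' : ℝ := z.toReal with hc'def
    have hc'z : (c' : EReal) = z := EReal.coe_toReal hzt hzb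
    have hαc' : α < (c' : EReal) := by rw [hc'z]; exact hz1
    have hc'γ : (c' : EReal) < (γ : EReal) := by
      rw [hc'z]; exact hz2.trans_le (min_le_right _ _)
    have hc'EI : c' ∈ EI α β := ⟨hαc', lt_trans hc'γ hγ.2⟩
    have hgood : ∀ x : ℝ, α < (x : EReal) → x < c' → |Cb x - Cb α| < ε ∧ x ∈ EI α β := by
      intro x hx1 hx2
      have hxc' : (x : EReal) < (c' : EReal) := EReal.coe_lt_coe_iff.2 hx2
      have hxEI : x ∈ EI α β := ⟨hx1, lt_trans (lt_trans hxc' hc'γ) hγ.2⟩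
      refine ⟨?_, hxEI⟩
      have hxU : (x : EReal) ∈ U := by
        apply hc2
        refine ⟨hx1.le, ?_⟩
        calc (x : EReal) < (c' : EReal) := hxc'
          _ = z := hc'z
          _ < min c (γ : EReal) := hz2
          _ ≤ c := min_le_left _ _
      have := hUsub ⟨hxU, ⟨hx1.le, hxEI.2.le⟩⟩
      simpa [Real.dist_eq] using this
    have hev1 : ∀ᶠ t : ℝ in L, α < (t : EReal) ∧ t < c' := by
      have h1 : ∀ᶠ x : EReal in 𝓝[>] α, x ∈ Iio (c' : EReal) :=
        mem_nhdsWithin_of_mem_nhds (Iio_mem_nhds hαc')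
      have h2 : ∀ᶠ x : EReal in 𝓝[>] α, x ∈ Ioi α := self_mem_nhdsWithin
      filter_upwards [tendsto_comap.eventually (h1.and h2)] with t ht
      exact ⟨ht.2, EReal.coe_lt_coe_iff.1 ht.1⟩
    filter_upwards [hev1, hFtop (F c' - s)] with t ht htF
    obtain ⟨ht1, ht2⟩ := ht
    have htEI : t ∈ EI α β := (hgood t ht1 ht2).2
    have hbEI : σ t ∈ EI α β := hσEI t
    have hblt : σ t < c' := by
      by_contra h
      push_neg at h
      have := hFmono hc'EI hbEI h
      rw [hFσ t] at this
      linarith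
    have hsub : ∀ x ∈ Set.uIcc t (σ t), α < (x : EReal) ∧ x < c' := by
      intro x hx
      have hxEI := hconn htEI hbEI hx
      rcases Set.mem_uIcc.1 hx with ⟨_, h2⟩ | ⟨_, h2⟩
      · exact ⟨hxEI.1, lt_of_le_of_lt h2 hblt⟩
      · exact ⟨hxEI.1, lt_of_le_of_lt h2 ht2⟩
    -- FTC
    have hderiv : ∀ x ∈ Set.uIcc t (σ t),
        HasDerivAt (fun y => Real.log (ψ y)) (Cb x * f x) x := by
      intro x hx
      obtain ⟨hx1, hx2⟩ := hsub x hx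
      have hxEI : x ∈ EI α β := (hgood x hx1 hx2).2
      have hψ0 : ψ x ≠ 0 := (hψpos x hxEI).ne'
      have hφ0 : φ x ≠ 0 := (hφpos x hxEI).ne'
      have h := (hψd x hxEI).hasDerivAt.log hψ0
      convert h using 1
      have hfx : f x = (φ x)⁻¹ := rfl
      rw [hCbI x hxEI, hfx]
      field_simp
    have hintCb : IntervalIntegrable (fun x => Cb x * f x) MeasureTheory.volume t (σ t) :=
      (hCbcont.mono fun x hx => hconn htEI hbEI hx).intervalIntegrable
    have hlog : (∫ x in t..(σ t), Cb x * f x) = Real.log (ψ (σ t)) - Real.log (ψ t) :=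
      intervalIntegral.integral_eq_sub_of_hasDerivAt hderiv hintCb
    have hsval : (∫ x in t..(σ t), f x) = s := by
      have h1 := hFsub htEI hbEI
      rw [hFσ t] at h1
      linarith
    have hintf : IntervalIntegrable f MeasureTheory.volume t (σ t) := hfint htEI hbEI
    have hlam : Cb α * s = ∫ x in t..(σ t), Cb α * f x := by
      rw [intervalIntegral.integral_const_mul, hsval]
    have hdiff : (Real.log (ψ (σ t)) - Real.log (ψ t)) - Cb α * s =
        ∫ x in t..(σ t), (Cb x - Cb α) * f x := by
      rw [← hlog, hlam, ← intervalIntegral.integral_sub hintCb (hintf.const_mul _)]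
      congr 1
      ext x
      ring
    rw [Real.dist_eq, sub_zero, hdiff]
    have hbnd : ‖∫ x in t..(σ t), (Cb x - Cb α) * f x‖ ≤ |∫ x in t..(σ t), ε * f x| := by
      apply intervalIntegral.norm_integral_le_abs_of_norm_le _ (hintf.const_mul ε)
      apply MeasureTheory.ae_restrict_of_forall_mem measurableSet_uIoc
      intro x hx
      have hx' := Set.Ioc_subset_Icc_self hx
      obtain ⟨hx1, hx2⟩ := hsub x hx'
      have hgx := hgood x hx1 hx2
      have hfx : 0 < f x := hfpos x hgx.2
      rw [Real.norm_eq_abs, abs_mul, abs_of_pos hfx]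
      exact mul_le_mul_of_nonneg_right hgx.1.le hfx.le
    have heq2 : |∫ x in t..(σ t), ε * f x| = ε * |s| := by
      rw [intervalIntegral.integral_const_mul, hsval, abs_mul, abs_of_pos hε]
    calc |∫ x in t..(σ t), (Cb x - Cb α) * f x| ≤ ε * |s| := by
          rw [← heq2]; exact hbnd
      _ < ε * (|s| + 1) := by nlinarith
      _ = δ := by rw [hεdef]; field_simp
  -- conclude
  have hratio : ∀ᶠ t : ℝ in L, ψ (σ t) / ψ t =
      Real.exp (((Real.log (ψ (σ t)) - Real.log (ψ t)) - Cb α * s) + Cb α * s) := by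
    filter_upwards [hevEI] with t ht
    rw [sub_add_cancel, Real.exp_sub, Real.exp_log (hψpos _ (hσEI t)),
      Real.exp_log (hψpos t ht)]
  have hexp : Tendsto (fun t => Real.exp (((Real.log (ψ (σ t)) - Real.log (ψ t)) - Cb α * s)
      + Cb α * s)) L (𝓝 (Real.exp (Cb α * s))) := by
    have h1 : Tendsto (fun t => ((Real.log (ψ (σ t)) - Real.log (ψ t)) - Cb α * s) + Cb α * s)
        L (𝓝 (0 + Cb α * s)) := hmain.add_const _
    rw [zero_add] at h1
    exact (Real.continuous_exp.tendsto _).comp h1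
  have hfirst : Tendsto (fun t : ℝ => ψ (σ t) / ψ t) L (𝓝 (Real.exp (Cb α * s))) :=
    hexp.congr' (by filter_upwards [hratio] with t ht; rw [ht])
  refine ⟨hfirst, ?_⟩
  have hsecond : Tendsto (fun t : ℝ => (ψ (σ t) / ψ t)⁻¹) L (𝓝 (Real.exp (Cb α * s))⁻¹) :=
    hfirst.inv₀ (Real.exp_ne_zero _)
  rw [← Real.exp_neg] at hsecond
  apply hsecond.congr
  intro t
  rw [inv_div]
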